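/- The matrix of E₁^w over the standard even form factors as a product of elementary orthogonal generators: with n = 2r, the (n+2)×(n+2) matrix with identity diagonal, last column (−w₁,…,−w_n, −q(w), 1)ᵗ pattern and row n+1 containing wᵗψ̃_r in the first n entries, equals ∏_{i=1}^{n−1} oe_{i,n+2}(−w_i/2) · oe_{n,n+2}(−w_n) · ∏_{i=1}^{n−1} oe_{n−i,n+2}(−w_{n−i}/2). -/

import Mathlib

open Matrix

variable {R : Type*} [CommRing R] {r : ℕ}

/-- The standard hyperbolic symmetric matrix ψ̃_r of size 2r×2r. -/
def psi (R : Type*) [CommRing R] (r : ℕ) : Matrix (Fin (2*r)) (Fin (2*r)) R :=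
  Matrix.of fun k l =>
    if l.1 = (if k.1 % 2 = 0 then k.1 + 1 else k.1 - 1) then 1 else 0

/-- The involution σ on {1,…,2r+2} (0-based), swapping each hyperbolic pair. -/
def sig2 (k : Fin (2*r+2)) : Fin (2*r+2) :=
  ⟨if k.1 % 2 = 0 then k.1 + 1 else k.1 - 1, by have := k.isLt; split <;> omega⟩

/-- The elementary orthogonal generator oe_{i,j}(z) = I + z·e_{i,j} − z·e_{σ(j),σ(i)}
of size (2r+2)×(2r+2). -/
def oe2 (i j : Fin (2*r+2)) (z : R) : Matrix (Fin (2*r+2)) (Fin (2*r+2)) R :=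
  1 + Matrix.single i j z - Matrix.single (sig2 j) (sig2 i) z

/-- The inclusion Fin 2r → Fin (2r+2). -/
def emb (i : Fin (2*r)) : Fin (2*r+2) := ⟨i.1, by have := i.isLt; omega⟩

/-- The index n+1 (0-based: 2r). -/
def rowB : Fin (2*r+2) := ⟨2*r, by omega⟩
/-- The index n+2 (0-based: 2r+1). -/
def colL : Fin (2*r+2) := ⟨2*r+1, by omega⟩

/-- The matrix of E₁^w: identity diagonal, last column (−w₁,…,−w_n,−q(w),1)ᵗ, and
row n+1 with wᵗψ̃_r in its first n entries, where q(w) = (1/2)·wψ̃_rwᵗ. -/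
def E1mat [Invertible (2 : R)] (w : Fin (2*r) → R) :
    Matrix (Fin (2*r+2)) (Fin (2*r+2)) R :=
  1 + (∑ i : Fin (2*r), Matrix.single (emb i) colL (-(w i)))
    + (∑ j : Fin (2*r), Matrix.single rowB (emb j) (Matrix.vecMul w (psi R r) j))
    + Matrix.single rowB colL (-(⅟(2 : R) * (w ⬝ᵥ (psi R r).mulVec w)))


def sig0 (k : Fin (2*r)) : Fin (2*r) :=
  ⟨if k.1 % 2 = 0 then k.1 + 1 else k.1 - 1, by have := k.isLt; split <;> omega⟩

lemma sig0_val (k : Fin (2*r)) :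
    (sig0 k).1 = if k.1 % 2 = 0 then k.1 + 1 else k.1 - 1 := rfl

lemma sig0_sig0 (a : Fin (2*r)) : sig0 (sig0 a) = a := by
  have := a.isLt
  apply Fin.ext
  rw [sig0_val, sig0_val]
  split_ifs <;> omega

lemma sig0_ne (a : Fin (2*r)) : a ≠ sig0 a := by
  have := a.isLt
  intro h
  have h2 : a.1 = (sig0 a).1 := by rw [← h]
  rw [sig0_val] at h2
  split_ifs at h2 <;> omega

def dl (a : Fin (2*r)) (z : R) : Fin (2*r) → R := fun i => if i = a then z else 0

def Emat (v u : Fin (2*r) → R) (c : R) : Matrix (Fin (2*r+2)) (Fin (2*r+2)) R :=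
  1 + (∑ i : Fin (2*r), Matrix.single (emb i) colL (v i))
    + (∑ j : Fin (2*r), Matrix.single rowB (emb j) (u j))
    + Matrix.single rowB colL c

lemma emb_injective : Function.Injective (emb (r := r)) := by
  intro a b h
  have h2 : (emb a).1 = (emb b).1 := congrArg Fin.val h
  exact Fin.ext h2

lemma colL_ne_emb (a : Fin (2*r)) : colL ≠ emb a := by
  have := a.isLt
  intro h
  have := congrArg Fin.val h
  simp [colL, emb] at this
  omega

lemma colL_ne_rowB : (colL : Fin (2*r+2)) ≠ rowB := by
  intro h
  have := congrArg Fin.val h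
  simp [colL, rowB] at this

lemma emb_ne_rowB (a : Fin (2*r)) : emb a ≠ rowB := by
  have := a.isLt
  intro h
  have := congrArg Fin.val h
  simp [emb, rowB] at this
  omega

lemma sig2_emb (a : Fin (2*r)) : sig2 (emb a) = emb (sig0 a) := rfl

lemma sig2_colL : sig2 (colL : Fin (2*r+2)) = rowB := by
  apply Fin.ext
  simp only [sig2, colL, rowB]
  show (if (2*r+1) % 2 = 0 then 2*r+1+1 else 2*r+1-1) = 2*r
  split <;> omega

lemma std_neg (i j : Fin (2*r+2)) (z : R) :
    Matrix.single i j (-z) = -Matrix.single i j z := by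
  ext a b
  simp only [Matrix.single, of_apply, Matrix.neg_apply]
  split <;> simp

lemma sum_stdBasis_dl (p q : Fin (2*r) → Fin (2*r+2)) (a : Fin (2*r)) (z : R) :
    ∑ i : Fin (2*r), Matrix.single (p i) (q i) (dl a z i)
      = Matrix.single (p a) (q a) z := by
  rw [Finset.sum_eq_single a (fun b _ hb => by simp [dl, hb]) (by simp)]
  simp [dl]

lemma oe2_emb (a : Fin (2*r)) (z : R) :
    oe2 (emb a) colL z = Emat (dl a z) (dl (sig0 a) (-z)) 0 := by
  rw [Emat, oe2, sig2_colL, sig2_emb, sum_stdBasis_dl, sum_stdBasis_dl,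
    Matrix.single_zero, std_neg]
  abel

lemma std_mul_of_ne {i j k l : Fin (2*r+2)} (h : j ≠ k) (c d : R) :
    Matrix.single i j c * Matrix.single k l d = 0 :=
  Matrix.single_mul_single_of_ne _ _ _ _ h _

lemma std_mul_same (i j k : Fin (2*r+2)) (c d : R) :
    Matrix.single i j c * Matrix.single j k d = Matrix.single i k (c * d) :=
  Matrix.single_mul_single_same _ _ _ _ _

lemma sumcol_mul_stdcol (v : Fin (2*r) → R) (a : Fin (2*r)) (z : R) :
    (∑ i : Fin (2*r), Matrix.single (emb i) (colL (r:=r)) (v i)) * Matrix.single (emb a) (colL (r:=r)) z = 0 := by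
  rw [Finset.sum_mul]
  exact Finset.sum_eq_zero fun i _ => std_mul_of_ne (colL_ne_emb a) _ _

lemma sumrow_mul_stdcol (u : Fin (2*r) → R) (a : Fin (2*r)) (z : R) :
    (∑ j : Fin (2*r), Matrix.single (rowB (r:=r)) (emb j) (u j)) * Matrix.single (emb a) (colL (r:=r)) z
      = Matrix.single (rowB (r:=r)) (colL (r:=r)) (u a * z) := by
  rw [Finset.sum_mul, Finset.sum_eq_single a
    (fun b _ hb => std_mul_of_ne (fun h => hb (emb_injective h)) _ _) (by simp)]
  exact std_mul_same _ _ _ _ _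

lemma sumcol_mul_stdrow (v : Fin (2*r) → R) (a : Fin (2*r)) (z : R) :
    (∑ i : Fin (2*r), Matrix.single (emb i) (colL (r:=r)) (v i)) * Matrix.single (rowB (r:=r)) (emb a) z = 0 := by
  rw [Finset.sum_mul]
  exact Finset.sum_eq_zero fun i _ => std_mul_of_ne colL_ne_rowB _ _

lemma sumrow_mul_stdrow (u : Fin (2*r) → R) (a : Fin (2*r)) (z : R) :
    (∑ j : Fin (2*r), Matrix.single (rowB (r:=r)) (emb j) (u j)) * Matrix.single (rowB (r:=r)) (emb a) z = 0 := by
  rw [Finset.sum_mul]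
  exact Finset.sum_eq_zero fun j _ => std_mul_of_ne (emb_ne_rowB j) _ _

lemma stdcol_mul_sumcol (v : Fin (2*r) → R) (a : Fin (2*r)) (z : R) :
    Matrix.single (emb a) (colL (r:=r)) z * (∑ i : Fin (2*r), Matrix.single (emb i) (colL (r:=r)) (v i)) = 0 := by
  rw [Finset.mul_sum]
  exact Finset.sum_eq_zero fun i _ => std_mul_of_ne (colL_ne_emb i) _ _

lemma stdcol_mul_sumrow (u : Fin (2*r) → R) (a : Fin (2*r)) (z : R) :
    Matrix.single (emb a) (colL (r:=r)) z * (∑ j : Fin (2*r), Matrix.single (rowB (r:=r)) (emb j) (u j)) = 0 := by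
  rw [Finset.mul_sum]
  exact Finset.sum_eq_zero fun j _ => std_mul_of_ne colL_ne_rowB _ _

lemma stdrow_mul_sumcol (v : Fin (2*r) → R) (a : Fin (2*r)) (z : R) :
    Matrix.single (rowB (r:=r)) (emb a) z * (∑ i : Fin (2*r), Matrix.single (emb i) (colL (r:=r)) (v i))
      = Matrix.single (rowB (r:=r)) (colL (r:=r)) (z * v a) := by
  rw [Finset.mul_sum, Finset.sum_eq_single a
    (fun b _ hb => std_mul_of_ne (fun h => hb (emb_injective h).symm) _ _) (by simp)]
  exact std_mul_same _ _ _ _ _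

lemma stdrow_mul_sumrow (u : Fin (2*r) → R) (a : Fin (2*r)) (z : R) :
    Matrix.single (rowB (r:=r)) (emb a) z * (∑ j : Fin (2*r), Matrix.single (rowB (r:=r)) (emb j) (u j)) = 0 := by
  rw [Finset.mul_sum]
  exact Finset.sum_eq_zero fun j _ => std_mul_of_ne (emb_ne_rowB a) _ _

lemma Emat_mul_stdcol (v u : Fin (2*r) → R) (c : R) (a : Fin (2*r)) (z : R) :
    Emat v u c * Matrix.single (emb a) (colL (r:=r)) z
      = Matrix.single (emb a) (colL (r:=r)) z + Matrix.single (rowB (r:=r)) (colL (r:=r)) (u a * z) := by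
  rw [Emat, add_mul, add_mul, add_mul, one_mul, sumcol_mul_stdcol, sumrow_mul_stdcol,
    std_mul_of_ne (colL_ne_emb a)]
  abel

lemma Emat_mul_stdrow (v u : Fin (2*r) → R) (c : R) (a : Fin (2*r)) (z : R) :
    Emat v u c * Matrix.single (rowB (r:=r)) (emb a) z = Matrix.single (rowB (r:=r)) (emb a) z := by
  rw [Emat, add_mul, add_mul, add_mul, one_mul, sumcol_mul_stdrow, sumrow_mul_stdrow,
    std_mul_of_ne colL_ne_rowB]
  abel

lemma stdcol_mul_Emat (v u : Fin (2*r) → R) (c : R) (a : Fin (2*r)) (z : R) :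
    Matrix.single (emb a) (colL (r:=r)) z * Emat v u c = Matrix.single (emb a) (colL (r:=r)) z := by
  rw [Emat, mul_add, mul_add, mul_add, mul_one, stdcol_mul_sumcol, stdcol_mul_sumrow,
    std_mul_of_ne colL_ne_rowB]
  abel

lemma stdrow_mul_Emat (v u : Fin (2*r) → R) (c : R) (a : Fin (2*r)) (z : R) :
    Matrix.single (rowB (r:=r)) (emb a) z * Emat v u c
      = Matrix.single (rowB (r:=r)) (emb a) z + Matrix.single (rowB (r:=r)) (colL (r:=r)) (z * v a) := by
  rw [Emat, mul_add, mul_add, mul_add, mul_one, stdrow_mul_sumcol, stdrow_mul_sumrow,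
    std_mul_of_ne (emb_ne_rowB a)]
  abel

lemma Emat_mul_oe2 (v u : Fin (2*r) → R) (c : R) (a : Fin (2*r)) (z : R) :
    Emat v u c * oe2 (emb a) (colL (r:=r)) z
      = Emat (fun i => v i + dl a z i) (fun j => u j + dl (sig0 a) (-z) j) (c + u a * z) := by
  rw [oe2, sig2_colL, sig2_emb, mul_sub, mul_add, mul_one, Emat_mul_stdcol, Emat_mul_stdrow]
  rw [Emat, Emat]
  simp only [Matrix.single_add, Finset.sum_add_distrib, sum_stdBasis_dl, std_neg]
  abel

lemma oe2_mul_Emat (v u : Fin (2*r) → R) (c : R) (a : Fin (2*r)) (z : R) :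
    oe2 (emb a) (colL (r:=r)) z * Emat v u c
      = Emat (fun i => v i + dl a z i) (fun j => u j + dl (sig0 a) (-z) j)
          (c - z * v (sig0 a)) := by
  rw [oe2, sig2_colL, sig2_emb, sub_mul, add_mul, one_mul, stdcol_mul_Emat, stdrow_mul_Emat]
  rw [Emat, Emat]
  simp only [Matrix.single_add, Finset.sum_add_distrib, sum_stdBasis_dl, std_neg, sub_eq_add_neg]
  abel
lemma Emat_congr {v v' u u' : Fin (2*r) → R} {c c' : R}
    (hv : ∀ i, v i = v' i) (hu : ∀ j, u j = u' j) (hc : c = c') :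
    Emat v u c = Emat v' u' c' := by
  rw [funext hv, funext hu, hc]

lemma dl_apply (a : Fin (2*r)) (z : R) (i : Fin (2*r)) :
    dl a z i = if i.1 = a.1 then z else 0 := by
  simp [dl, Fin.ext_iff]

lemma sum_extract {n : ℕ} (f g : Fin n → R) (a b : Fin n) (x y : R)
    (h : ∀ i, f i = g i + (if i = a then x else 0) + (if i = b then y else 0)) :
    ∑ i, f i = (∑ i, g i) + x + y := by
  simp only [h, Finset.sum_add_distrib, Fintype.sum_ite_eq']

def Agen [Invertible (2:R)] (w : Fin (2*r) → R) (a : ℕ) :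
    Matrix (Fin (2*r+2)) (Fin (2*r+2)) R :=
  if h : a < 2*r then oe2 (emb ⟨a, h⟩) colL (-(⅟(2:R) * w ⟨a, h⟩)) else 1

set_option maxHeartbeats 1000000 in
lemma key [Invertible (2:R)] (hr : 1 ≤ r) (w : Fin (2*r) → R) :
    ∀ m, m ≤ 2*r-1 →
    (List.ofFn (fun i : Fin m => Agen w (2*r-1-m+i.1))).prod
      * oe2 (emb ⟨2*r-1, by have := hr; omega⟩) colL (-(w ⟨2*r-1, by have := hr; omega⟩))
      * (List.ofFn (fun i : Fin m => Agen w (2*r-2-i.1))).prod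
    = Emat (fun i => if 2*r-1-m ≤ i.1 then -w i else 0)
           (fun j => if 2*r-1-m ≤ (sig0 j).1 then w (sig0 j) else 0)
           (-(⅟(2:R) * ∑ i : Fin (2*r),
              if 2*r-1-m ≤ i.1 ∧ 2*r-1-m ≤ (sig0 i).1 then w i * w (sig0 i) else 0)) := by
  intro m
  induction m with
  | zero =>
    intro _
    simp only [List.ofFn_zero, List.prod_nil, one_mul, mul_one]
    rw [oe2_emb]
    have hv : dl (⟨2*r-1, by omega⟩ : Fin (2*r)) (-(w ⟨2*r-1, by omega⟩))
        = fun i : Fin (2*r) => if 2*r-1-0 ≤ i.1 then -w i else 0 := by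
      funext i
      have hi := i.isLt
      rw [dl_apply, Fin.val_mk]
      by_cases h1 : i.1 = 2*r-1
      · rw [if_pos h1, if_pos (by omega)]
        have : i = ⟨2*r-1, by omega⟩ := Fin.ext h1
        rw [this]
      · rw [if_neg h1, if_neg (by omega)]
    have hu : dl (sig0 (⟨2*r-1, by omega⟩ : Fin (2*r))) (-(-(w ⟨2*r-1, by omega⟩)))
        = fun j : Fin (2*r) => if 2*r-1-0 ≤ (sig0 j).1 then w (sig0 j) else 0 := by
      funext j
      have hj := j.isLt
      have hsj := (sig0 j).isLt
      rw [dl_apply, neg_neg]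
      have hs : (sig0 (⟨2*r-1, by omega⟩ : Fin (2*r))).1 = 2*r-2 := by
        rw [sig0_val, Fin.val_mk]
        split_ifs <;> omega
      rw [hs]
      by_cases h1 : j.1 = 2*r-2
      · rw [if_pos h1, if_pos (by rw [sig0_val]; split_ifs <;> omega)]
        have h2 : sig0 j = ⟨2*r-1, by omega⟩ := by
          apply Fin.ext
          show (sig0 j).1 = 2*r-1
          rw [sig0_val]
          split_ifs <;> omega
        rw [h2]
      · rw [if_neg h1, if_neg (by rw [sig0_val]; split_ifs <;> omega)]
    have hc : (0:R) = -(⅟(2:R) * ∑ i : Fin (2*r),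
        if 2*r-1-0 ≤ i.1 ∧ 2*r-1-0 ≤ (sig0 i).1 then w i * w (sig0 i) else 0) := by
      have hsum : (∑ i : Fin (2*r),
          if 2*r-1-0 ≤ i.1 ∧ 2*r-1-0 ≤ (sig0 i).1 then w i * w (sig0 i) else 0) = (0:R) := by
        refine Finset.sum_eq_zero fun i _ => ?_
        have hi := i.isLt
        rw [if_neg]
        rw [sig0_val]
        split_ifs <;> omega
      rw [hsum, mul_zero, neg_zero]
    rw [hv, hu, ← hc]
  | succ m ih =>
    intro hm1
    have hk : 2*r-2-m < 2*r := by omega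
    have hasc : List.ofFn (fun i : Fin (m+1) => Agen w (2*r-1-(m+1)+i.1))
        = Agen w (2*r-2-m) :: List.ofFn (fun i : Fin m => Agen (R := R) w (2*r-1-m+i.1)) := by
      rw [List.ofFn_succ]
      congr 1
      · show Agen w (2*r-1-(m+1)+(0 : Fin (m+1)).1) = Agen w (2*r-2-m)
        rw [Fin.val_zero]
        exact congrArg (Agen w) (by omega)
      · refine congrArg List.ofFn (funext fun i => ?_)
        show Agen w (2*r-1-(m+1)+(Fin.succ i).1) = Agen w (2*r-1-m+i.1)
        rw [Fin.val_succ]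
        have := i.isLt
        exact congrArg (Agen w) (by omega)
    have hdesc : List.ofFn (fun i : Fin (m+1) => Agen (R := R) w (2*r-2-i.1))
        = (List.ofFn (fun i : Fin m => Agen (R := R) w (2*r-2-i.1))).concat
            (Agen w (2*r-2-m)) := by
      rw [List.ofFn_succ']
      rfl
    rw [hasc, hdesc, List.prod_cons, List.prod_concat]
    have hre : ∀ (A P M Q : Matrix (Fin (2*r+2)) (Fin (2*r+2)) R),
        A * P * M * (Q * A) = A * (P * M * Q) * A := fun A P M Q => by
      simp only [mul_assoc]
    rw [hre, ih (by omega)]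
    simp only [Agen]
    rw [dif_pos hk, oe2_mul_Emat, Emat_mul_oe2]
    have hb : 2*r-1-m < 2*r := by omega
    refine Emat_congr (fun i => ?_) (fun j => ?_) ?_
    · -- v component
      simp only [dl_apply, Fin.val_mk]
      have hil := i.isLt
      by_cases h1 : i.1 = 2*r-2-m
      · have h2 : i = ⟨2*r-2-m, hk⟩ := Fin.ext h1
        rw [if_pos h1, if_neg (by omega), if_pos (by omega), h2]
        linear_combination (-(w (⟨2*r-2-m, hk⟩ : Fin (2*r)))) * invOf_mul_self (2:R)
      · rw [if_neg h1]
        have h3 : (2*r-1-m ≤ i.1) = (2*r-1-(m+1) ≤ i.1) := propext (by omega)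
        simp only [h3]
        ring
    · -- u component
      simp only [dl_apply]
      have hjl := j.isLt
      by_cases h1 : j.1 = (sig0 (⟨2*r-2-m, hk⟩ : Fin (2*r))).1
      · have h2 : sig0 j = ⟨2*r-2-m, hk⟩ := by
          rw [Fin.ext h1, sig0_sig0]
        rw [if_pos h1, h2]
        rw [if_neg (show ¬(2*r-1-m ≤ ((⟨2*r-2-m, hk⟩ : Fin (2*r))).1) from by
              simp only [Fin.val_mk]; omega),
          if_pos (show 2*r-1-(m+1) ≤ ((⟨2*r-2-m, hk⟩ : Fin (2*r))).1 from by
              simp only [Fin.val_mk]; omega)]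
        linear_combination (w (⟨2*r-2-m, hk⟩ : Fin (2*r))) * invOf_mul_self (2:R)
      · rw [if_neg h1]
        have h3 : (sig0 j).1 ≠ 2*r-2-m := by
          intro hh
          apply h1
          have h4 : sig0 j = ⟨2*r-2-m, hk⟩ := Fin.ext hh
          rw [← h4, sig0_sig0]
        have hsl := (sig0 j).isLt
        have h5 : (2*r-1-m ≤ (sig0 j).1) = (2*r-1-(m+1) ≤ (sig0 j).1) := propext (by omega)
        simp only [h5]
        ring
    · -- c component
      have hdl0 : dl (sig0 (⟨2*r-2-m, hk⟩ : Fin (2*r)))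
          (-(-(⅟(2:R) * w ⟨2*r-2-m, hk⟩))) ⟨2*r-2-m, hk⟩ = 0 := by
        rw [dl_apply, if_neg]
        rw [sig0_val]
        split_ifs <;> omega
      rw [hdl0]
      by_cases hpar : (2*r-2-m) % 2 = 0
      · -- even case
        have hs : sig0 (⟨2*r-2-m, hk⟩ : Fin (2*r)) = ⟨2*r-1-m, hb⟩ := by
          apply Fin.ext
          rw [sig0_val]
          show (if (2*r-2-m) % 2 = 0 then 2*r-2-m + 1 else 2*r-2-m - 1) = 2*r-1-m
          rw [if_pos hpar]
          omega
        rw [hs]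
        rw [if_pos (show 2*r-1-m ≤ ((⟨2*r-1-m, hb⟩ : Fin (2*r))).1 from by
              simp only [Fin.val_mk]; omega)]
        rw [if_pos (show 2*r-1-m ≤ ((⟨2*r-1-m, hb⟩ : Fin (2*r))).1 from by
              simp only [Fin.val_mk]; omega)]
        have hs2 : sig0 (⟨2*r-1-m, hb⟩ : Fin (2*r)) = ⟨2*r-2-m, hk⟩ := by
          rw [← hs, sig0_sig0]
        have hsum : (∑ i : Fin (2*r),
              if 2*r-1-(m+1) ≤ i.1 ∧ 2*r-1-(m+1) ≤ (sig0 i).1 then w i * w (sig0 i) else 0)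
            = (∑ i : Fin (2*r),
                if 2*r-1-m ≤ i.1 ∧ 2*r-1-m ≤ (sig0 i).1 then w i * w (sig0 i) else 0)
              + w ⟨2*r-2-m, hk⟩ * w ⟨2*r-1-m, hb⟩ + w ⟨2*r-1-m, hb⟩ * w ⟨2*r-2-m, hk⟩ := by
          refine sum_extract _ _ ⟨2*r-2-m, hk⟩ ⟨2*r-1-m, hb⟩ _ _ (fun i => ?_)
          by_cases hia : i = (⟨2*r-2-m, hk⟩ : Fin (2*r))
          · subst hia
            rw [hs]
            simp only [Fin.val_mk, Fin.ext_iff]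
            split_ifs <;> first | ring1 | (exfalso; omega)
          · by_cases hib : i = (⟨2*r-1-m, hb⟩ : Fin (2*r))
            · subst hib
              rw [hs2]
              simp only [Fin.val_mk, Fin.ext_iff]
              split_ifs <;> first | ring1 | (exfalso; omega)
            · have hil := i.isLt
              have h6 : i.1 ≠ 2*r-2-m := fun hh => hia (Fin.ext hh)
              have h7 : (sig0 i).1 ≠ 2*r-2-m := by
                intro hh
                apply hib
                have h8 : sig0 i = ⟨2*r-2-m, hk⟩ := Fin.ext hh
                rw [← sig0_sig0 i, h8, hs]
              have hcond : (2*r-1-(m+1) ≤ i.1 ∧ 2*r-1-(m+1) ≤ (sig0 i).1)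
                  = (2*r-1-m ≤ i.1 ∧ 2*r-1-m ≤ (sig0 i).1) := propext (by
                have := (sig0 i).isLt
                omega)
              simp only [hcond]
              rw [if_neg hia, if_neg hib]
              ring
        rw [hsum]
        ring
      · -- odd case
        have hs : sig0 (⟨2*r-2-m, hk⟩ : Fin (2*r)) = ⟨2*r-3-m, by omega⟩ := by
          apply Fin.ext
          rw [sig0_val]
          show (if (2*r-2-m) % 2 = 0 then 2*r-2-m + 1 else 2*r-2-m - 1) = 2*r-3-m
          rw [if_neg hpar]
          omega
        rw [hs]
        rw [if_neg (show ¬(2*r-1-m ≤ ((⟨2*r-3-m, by omega⟩ : Fin (2*r))).1) from by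
              simp only [Fin.val_mk]; omega)]
        rw [if_neg (show ¬(2*r-1-m ≤ ((⟨2*r-3-m, by omega⟩ : Fin (2*r))).1) from by
              simp only [Fin.val_mk]; omega)]
        have hsum : (∑ i : Fin (2*r),
              if 2*r-1-(m+1) ≤ i.1 ∧ 2*r-1-(m+1) ≤ (sig0 i).1 then w i * w (sig0 i) else 0)
            = (∑ i : Fin (2*r),
                if 2*r-1-m ≤ i.1 ∧ 2*r-1-m ≤ (sig0 i).1 then w i * w (sig0 i) else 0) := by
          refine Finset.sum_congr rfl fun i _ => ?_
          have hsi := sig0_val i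
          have hil := i.isLt
          have hsl := (sig0 i).isLt
          by_cases hp2 : i.1 % 2 = 0
          · rw [if_pos hp2] at hsi
            have hcond : (2*r-1-(m+1) ≤ i.1 ∧ 2*r-1-(m+1) ≤ (sig0 i).1)
                = (2*r-1-m ≤ i.1 ∧ 2*r-1-m ≤ (sig0 i).1) := propext (by omega)
            simp only [hcond]
          · rw [if_neg hp2] at hsi
            have hcond : (2*r-1-(m+1) ≤ i.1 ∧ 2*r-1-(m+1) ≤ (sig0 i).1)
                = (2*r-1-m ≤ i.1 ∧ 2*r-1-m ≤ (sig0 i).1) := propext (by omega)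
            simp only [hcond]
        rw [hsum]
        ring

lemma psi_apply (k l : Fin (2*r)) : psi R r k l = if l = sig0 k then (1:R) else 0 := by
  have h : (l = sig0 k) = (l.1 = if k.1 % 2 = 0 then k.1 + 1 else k.1 - 1) :=
    propext (by rw [Fin.ext_iff, sig0_val])
  show (if l.1 = (if k.1 % 2 = 0 then k.1 + 1 else k.1 - 1) then (1:R) else 0) = _
  simp only [h]

lemma mulVec_psi (w : Fin (2*r) → R) (i : Fin (2*r)) :
    (psi R r).mulVec w i = w (sig0 i) := by
  have h : ∀ l, psi R r i l * w l = if l = sig0 i then w l else 0 := fun l => by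
    rw [psi_apply]; split_ifs <;> simp
  show ∑ l, psi R r i l * w l = w (sig0 i)
  simp only [h]
  rw [Finset.sum_ite_eq', if_pos (Finset.mem_univ _)]

lemma vecMul_psi (w : Fin (2*r) → R) (j : Fin (2*r)) :
    Matrix.vecMul w (psi R r) j = w (sig0 j) := by
  have h : ∀ k, w k * psi R r k j = if k = sig0 j then w k else 0 := fun k => by
    rw [psi_apply]
    by_cases hh : j = sig0 k
    · rw [if_pos hh, if_pos (by rw [hh, sig0_sig0]), mul_one]
    · rw [if_neg hh, if_neg (fun h2 => hh (by rw [h2, sig0_sig0])), mul_zero]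
  show ∑ k, w k * psi R r k j = w (sig0 j)
  simp only [h]
  rw [Finset.sum_ite_eq', if_pos (Finset.mem_univ _)]

theorem E1_factorization [Invertible (2 : R)] (hr : 1 ≤ r) (w : Fin (2*r) → R) :
    E1mat w =
      (List.ofFn (fun i : Fin (2*r-1) =>
          oe2 (emb ⟨i.1, by have := i.isLt; omega⟩) colL
            (-(⅟(2 : R) * w ⟨i.1, by have := i.isLt; omega⟩)))).prod
        * oe2 (emb ⟨2*r-1, by omega⟩) colL (-(w ⟨2*r-1, by omega⟩))
        * (List.ofFn (fun i : Fin (2*r-1) =>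
          oe2 (emb ⟨2*r-2-i.1, by have := i.isLt; omega⟩) colL
            (-(⅟(2 : R) * w ⟨2*r-2-i.1, by have := i.isLt; omega⟩)))).prod := by
  have h1 : (List.ofFn (fun i : Fin (2*r-1) =>
          oe2 (emb ⟨i.1, by have := i.isLt; omega⟩) colL
            (-(⅟(2 : R) * w ⟨i.1, by have := i.isLt; omega⟩))))
      = List.ofFn (fun i : Fin (2*r-1) => Agen w (2*r-1-(2*r-1)+i.1)) := by
    refine congrArg List.ofFn (funext fun i => ?_)
    have hi : 2*r-1-(2*r-1)+i.1 < 2*r := by have := i.isLt; omega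
    simp only [Agen]
    rw [dif_pos hi]
    have he : (⟨2*r-1-(2*r-1)+i.1, hi⟩ : Fin (2*r)) = ⟨i.1, by have := i.isLt; omega⟩ :=
      Fin.ext (by simp only [Fin.val_mk]; omega)
    rw [he]
  have h2 : (List.ofFn (fun i : Fin (2*r-1) =>
          oe2 (emb ⟨2*r-2-i.1, by have := i.isLt; omega⟩) colL
            (-(⅟(2 : R) * w ⟨2*r-2-i.1, by have := i.isLt; omega⟩))))
      = List.ofFn (fun i : Fin (2*r-1) => Agen w (2*r-2-i.1)) := by
    refine congrArg List.ofFn (funext fun i => ?_)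
    have hi : 2*r-2-i.1 < 2*r := by omega
    simp only [Agen]
    rw [dif_pos hi]
  rw [h1, h2, key hr w (2*r-1) le_rfl]
  have h0 : E1mat w = Emat (fun i => -(w i)) (fun j => Matrix.vecMul w (psi R r) j)
      (-(⅟(2:R) * (w ⬝ᵥ (psi R r).mulVec w))) := rfl
  rw [h0]
  refine Emat_congr (fun i => ?_) (fun j => ?_) ?_
  · rw [if_pos (by omega)]
  · rw [if_pos (by omega), vecMul_psi]
  · have hdot : w ⬝ᵥ (psi R r).mulVec w = ∑ i : Fin (2*r),
        if 2*r-1-(2*r-1) ≤ i.1 ∧ 2*r-1-(2*r-1) ≤ (sig0 i).1 then w i * w (sig0 i) else 0 := by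
      refine Finset.sum_congr rfl fun i _ => ?_
      rw [mulVec_psi, if_pos ⟨by omega, by omega⟩]
    rw [hdot]
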